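/- arXiv:1401.1905 — 2 statements merged into one kernel-verified Lean document; each statement's English description precedes it below -/
import Mathlib

section
/- Consider the GTSP instance G_G on m clusters and, for a cluster permutation pi, let a(pi) denote the number of indices i in {0,...,m-1} such that the clusters at cyclically consecutive positions i and i+1 of pi are consecutive modulo m (i.e., their labels differ by 1 mod m). Then for every non-optimal cluster permutation pi, the lower-level optimal node selection uses only white nodes and the cost of pi equals c(pi) = m + a(pi). Consequently, if pi and pi' are two non-optimal cluster permutations with a(pi') > a(pi), then c(pi') > c(pi). -/
open scoped ENNReal BigOperators Classical

noncomputable section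

/-- The cyclic successor of a position/label `i` in `Fin m`: `(i + 1) mod m`. -/
def cyc {m : ℕ} (i : Fin m) : Fin m :=
  ⟨(i.val + 1) % m, Nat.mod_lt _ (Nat.lt_of_le_of_lt (Nat.zero_le i.val) i.isLt)⟩

/-- The lower-level value of a cluster permutation `π`: the minimum over node selections
`p i ∈ Vc i` of the cost of the Hamiltonian cycle visiting the selected nodes in the cyclic
order given by `π` (the lower-level problem is solved optimally). -/
def tourValue {V : Type*} (c : V → V → ℝ≥0∞) {m : ℕ} (Vc : Fin m → Finset V)
    (π : Fin m → Fin m) : ℝ≥0∞ :=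
  ⨅ (p : Fin m → V) (_ : ∀ i, p i ∈ Vc i), ∑ i : Fin m, c (p (π i)) (p (π (cyc i)))

/-- Optimal upper-level solutions of the GTSP: cluster permutations whose lower-level value
is globally minimal. -/
def OptTour {V : Type*} (c : V → V → ℝ≥0∞) {m : ℕ} (Vc : Fin m → Finset V)
    (π : Fin m → Fin m) : Prop :=
  Function.Bijective π ∧
    ∀ σ : Fin m → Fin m, Function.Bijective σ → tourValue c Vc π ≤ tourValue c Vc σ
/-- The node set of the GTSP instance `G_G`: cluster `i` (labels modulo `m`) contains the
black node `b_i = (i, false)` and the white node `w_i = (i, true)`. -/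
abbrev VT (m : ℕ) := Fin m × Bool

/-- The clusters of the GTSP instance `G_G`. -/
def VcT (m : ℕ) : Fin m → Finset (VT m) := fun i => {(i, false), (i, true)}

/-- The edge costs of the GTSP instance `G_G`: `c(b_i, b_{i+1 mod m}) = 1/m` for every `i`;
`c(w_i, w_{i+1 mod m}) = 2` for every `i`; `c(w_i, w_j) = 1` for every other pair of
distinct white nodes; and every edge between a black node and a white node, as well as
every remaining edge between two black nodes, has cost `m²`. -/
def cT (m : ℕ) (p q : VT m) : ℝ≥0∞ :=
  if p = q then 0
  else if p.2 = false ∧ q.2 = false then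
    (if q.1 = cyc p.1 ∨ p.1 = cyc q.1 then (m : ℝ≥0∞)⁻¹ else (m : ℝ≥0∞) ^ 2)
  else if p.2 = true ∧ q.2 = true then
    (if q.1 = cyc p.1 ∨ p.1 = cyc q.1 then 2 else 1)
  else (m : ℝ≥0∞) ^ 2

/-- `aCount m π` is the number of indices `i ∈ {0,…,m-1}` such that the clusters at the
cyclically consecutive positions `i` and `i+1` of `π` are consecutive modulo `m`, i.e.
their labels differ by `1` mod `m`. -/
def aCount (m : ℕ) (π : Fin m → Fin m) : ℕ :=
  (Finset.univ.filter (fun i : Fin m => π (cyc i) = cyc (π i) ∨ π i = cyc (π (cyc i)))).card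
section AuxProofs
variable {m : ℕ}

lemma cyc_ne_self (hm : 2 ≤ m) (i : Fin m) : cyc i ≠ i := by
  intro h
  have h1 : (i.val + 1) % m = i.val := congrArg Fin.val h
  have h2 := i.isLt
  rcases lt_or_ge (i.val + 1) m with h3 | h3
  · rw [Nat.mod_eq_of_lt h3] at h1; omega
  · have h4 : i.val + 1 = m := by omega
    rw [h4, Nat.mod_self] at h1
    omega

lemma cT_white (i j : Fin m) (hij : i ≠ j) :
    cT m (i, true) (j, true) = if j = cyc i ∨ i = cyc j then 2 else 1 := by
  simp [cT, hij, Prod.ext_iff]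

lemma cT_black (i j : Fin m) (hij : i ≠ j) :
    cT m (i, false) (j, false) = if j = cyc i ∨ i = cyc j then (m : ℝ≥0∞)⁻¹ else (m:ℝ≥0∞)^2 := by
  simp [cT, hij, Prod.ext_iff]

lemma cT_mixed (p q : VT m) (h : p.2 ≠ q.2) : cT m p q = (m:ℝ≥0∞)^2 := by
  have hpq : p ≠ q := fun e => h (by rw [e])
  rcases p with ⟨a, pb⟩; rcases q with ⟨b, qb⟩
  simp only at h
  rcases pb <;> rcases qb <;> simp_all [cT]

lemma inv_le_cT (hm : 1 ≤ m) (p q : VT m) (h : p ≠ q) : (m:ℝ≥0∞)⁻¹ ≤ cT m p q := by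
  have h1 : (m:ℝ≥0∞)⁻¹ ≤ 1 := ENNReal.inv_le_one.mpr (by exact_mod_cast hm)
  have h2 : (1:ℝ≥0∞) ≤ (m:ℝ≥0∞)^2 := one_le_pow_of_one_le' (by exact_mod_cast hm) 2
  unfold cT
  split_ifs <;> first | exact absurd ‹p = q› h | exact le_refl _ | exact le_trans h1 h2 |
    exact le_trans h1 (by norm_num)

lemma VcT_eq {i : Fin m} {p : VT m} (h : p ∈ VcT m i) : p = (i, p.2) := by
  simp [VcT] at h; rcases h with h | h <;> simp [h]

lemma cyc_const {α : Sort*} (hm : 0 < m) (f : Fin m → α) (h : ∀ k, f (cyc k) = f k)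
    (k : Fin m) : f k = f ⟨0, hm⟩ := by
  obtain ⟨n, hn⟩ := k
  induction n with
  | zero => rfl
  | succ n ih =>
    have hn' : n < m := by omega
    have hc : cyc ⟨n, hn'⟩ = ⟨n + 1, hn⟩ := by
      simp [cyc, Nat.mod_eq_of_lt hn]
    rw [← hc, h]
    exact ih hn'

lemma pi_ne {π : Fin m → Fin m} (hm : 2 ≤ m) (hinj : Function.Injective π) (i : Fin m) :
    π i ≠ π (cyc i) := fun e => cyc_ne_self hm i (hinj e.symm)

lemma aCount_le (π : Fin m → Fin m) : aCount m π ≤ m := by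
  unfold aCount
  calc _ ≤ (Finset.univ : Finset (Fin m)).card := Finset.card_le_card (Finset.filter_subset _ _)
  _ = m := by simp

lemma white_sum (hm : 2 ≤ m) {π : Fin m → Fin m} (hinj : Function.Injective π) :
    ∑ i : Fin m, cT m (π i, true) (π (cyc i), true) = (m : ℝ≥0∞) + (aCount m π : ℝ≥0∞) := by
  have key : ∀ i : Fin m, cT m (π i, true) (π (cyc i), true)
      = 1 + if π (cyc i) = cyc (π i) ∨ π i = cyc (π (cyc i)) then (1:ℝ≥0∞) else 0 := by
    intro i
    rw [cT_white _ _ (pi_ne hm hinj i)]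
    split_ifs <;> norm_num
  rw [Finset.sum_congr rfl (fun i _ => key i), Finset.sum_add_distrib, Finset.sum_const,
    Finset.sum_boole]
  simp [aCount]

lemma aCount_eq_m_cond {π : Fin m → Fin m} (h : aCount m π = m) (i : Fin m) :
    π (cyc i) = cyc (π i) ∨ π i = cyc (π (cyc i)) := by
  have : (Finset.univ.filter
      (fun i : Fin m => π (cyc i) = cyc (π i) ∨ π i = cyc (π (cyc i)))) = Finset.univ := by
    apply Finset.eq_univ_of_card
    simpa [aCount] using h
  have hi : i ∈ Finset.univ.filter
      (fun i : Fin m => π (cyc i) = cyc (π i) ∨ π i = cyc (π (cyc i))) := by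
    rw [this]; exact Finset.mem_univ i
  exact (Finset.mem_filter.mp hi).2

lemma tourValue_ge_one (hm : 2 ≤ m) {σ : Fin m → Fin m} (hσ : Function.Bijective σ) :
    (1:ℝ≥0∞) ≤ tourValue (cT m) (VcT m) σ := by
  unfold tourValue
  refine le_iInf₂ fun p hp => ?_
  have hterm : ∀ i : Fin m, (m:ℝ≥0∞)⁻¹ ≤ cT m (p (σ i)) (p (σ (cyc i))) := by
    intro i
    apply inv_le_cT (by omega)
    intro e
    have e1 : (p (σ i)).1 = σ i := congrArg Prod.fst (VcT_eq (hp (σ i))).symm ▸ rfl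
    have h1 : p (σ i) = (σ i, (p (σ i)).2) := VcT_eq (hp (σ i))
    have h2 : p (σ (cyc i)) = (σ (cyc i), (p (σ (cyc i))).2) := VcT_eq (hp (σ (cyc i)))
    have : σ i = σ (cyc i) := by
      have := congrArg Prod.fst e
      rw [h1, h2] at e
      exact congrArg Prod.fst e
    exact pi_ne hm hσ.1 i this
  calc (1:ℝ≥0∞) = m • (m:ℝ≥0∞)⁻¹ := by
        rw [nsmul_eq_mul, ENNReal.mul_inv_cancel (by exact_mod_cast (by omega : m ≠ 0))
          (ENNReal.natCast_ne_top m)]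
  _ = (Finset.univ : Finset (Fin m)).card • (m:ℝ≥0∞)⁻¹ := by simp
  _ ≤ ∑ i : Fin m, cT m (p (σ i)) (p (σ (cyc i))) :=
      Finset.card_nsmul_le_sum _ _ _ (fun i _ => hterm i)

lemma opt_of_aCount_eq (hm : 2 ≤ m) {π : Fin m → Fin m} (hπ : Function.Bijective π)
    (h : aCount m π = m) : OptTour (cT m) (VcT m) π := by
  refine ⟨hπ, fun σ hσ => le_trans ?_ (tourValue_ge_one hm hσ)⟩
  have hub : tourValue (cT m) (VcT m) π ≤ ∑ i : Fin m,
      cT m ((fun j => (j, false)) (π i)) ((fun j => (j, false)) (π (cyc i))) := by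
    unfold tourValue
    exact iInf₂_le (fun j => (j, false)) (fun i => by simp [VcT])
  refine le_trans hub ?_
  have : ∀ i : Fin m, cT m (π i, false) (π (cyc i), false) = (m:ℝ≥0∞)⁻¹ := by
    intro i
    rw [cT_black _ _ (pi_ne hm hπ.1 i), if_pos (aCount_eq_m_cond h i)]
  rw [Finset.sum_congr rfl (fun i _ => this i), Finset.sum_const]
  simp only [Finset.card_univ, Fintype.card_fin, nsmul_eq_mul]
  rw [ENNReal.mul_inv_cancel (by exact_mod_cast (by omega : m ≠ 0)) (ENNReal.natCast_ne_top m)]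

lemma add_lt_sq (hm : 3 ≤ m) {a : ℕ} (ha : a ≤ m) :
    (m : ℝ≥0∞) + (a : ℝ≥0∞) < (m : ℝ≥0∞)^2 := by
  have h1 : ((m + a : ℕ) : ℝ≥0∞) < ((m ^ 2 : ℕ) : ℝ≥0∞) := by
    exact_mod_cast (by nlinarith : m + a < m ^ 2)
  push_cast at h1
  exact h1

lemma mixed_lb (hm : 3 ≤ m) {π : Fin m → Fin m} (hπ : Function.Bijective π)
    (ha : aCount m π < m) {p : Fin m → VT m} (hp : ∀ i, p i ∈ VcT m i)
    (hnw : ¬ ∀ i, (p i).2 = true) :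
    (m:ℝ≥0∞)^2 ≤ ∑ i : Fin m, cT m (p (π i)) (p (π (cyc i))) := by
  push_neg at hnw
  obtain ⟨i0, hi0⟩ := hnw
  have hb0 : (p i0).2 = false := by simpa using hi0
  have hterm : ∃ k : Fin m, cT m (p (π k)) (p (π (cyc k))) = (m:ℝ≥0∞)^2 := by
    by_cases hw : ∃ j, (p j).2 = true
    · obtain ⟨j0, hj0⟩ := hw
      have hne : ∃ k, (p (π k)).2 ≠ (p (π (cyc k))).2 := by
        by_contra hc
        push_neg at hc
        have hconst := cyc_const (m := m) (by omega) (fun k => (p (π k)).2)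
          (fun k => (hc k).symm)
        obtain ⟨ki, hki⟩ := hπ.2 i0
        obtain ⟨kj, hkj⟩ := hπ.2 j0
        have e1 : (p (π ki)).2 = false := by rw [hki]; exact hb0
        have e2 : (p (π kj)).2 = true := by rw [hkj]; exact hj0
        have e1' : (p (π ⟨0, by omega⟩)).2 = false := by
          have := hconst ki; rw [← this]; exact e1
        have e2' : (p (π ⟨0, by omega⟩)).2 = true := by
          have := hconst kj; rw [← this]; exact e2
        rw [e1'] at e2'
        exact Bool.false_ne_true e2'
      obtain ⟨k, hk⟩ := hne
      exact ⟨k, cT_mixed _ _ hk⟩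
    · push_neg at hw
      have hall : ∀ i, p i = (i, false) := by
        intro i
        have h1 := VcT_eq (hp i)
        have h2 : (p i).2 = false := by simpa using hw i
        rw [h2] at h1
        exact h1
      have hex : ∃ k, ¬ (π (cyc k) = cyc (π k) ∨ π k = cyc (π (cyc k))) := by
        by_contra hc
        push_neg at hc
        have : aCount m π = m := by
          unfold aCount
          rw [Finset.filter_true_of_mem (fun i _ => hc i)]
          simp
        omega
      obtain ⟨k, hk⟩ := hex
      refine ⟨k, ?_⟩
      rw [hall (π k), hall (π (cyc k)), cT_black _ _ (pi_ne (by omega) hπ.1 k), if_neg hk]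
  obtain ⟨k, hk⟩ := hterm
  calc (m:ℝ≥0∞)^2 = cT m (p (π k)) (p (π (cyc k))) := hk.symm
  _ ≤ _ := Finset.single_le_sum (f := fun i => cT m (p (π i)) (p (π (cyc i)))) (fun _ _ => zero_le) (Finset.mem_univ k)

end AuxProofs

/-- In the GTSP instance `G_G` on `m` clusters, for every non-optimal cluster
permutation `π`, the lower-level optimal node selection uses only white nodes and the cost
of `π` equals `c(π) = m + a(π)`; consequently, if `π` and `π'` are two non-optimal cluster
permutations with `a(π') > a(π)`, then `c(π') > c(π)`. -/
theorem GTSP_GG_cost_structure (m : ℕ) (hm : 3 ≤ m) :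
    (∀ π : Fin m → Fin m, Function.Bijective π → ¬ OptTour (cT m) (VcT m) π →
      tourValue (cT m) (VcT m) π = (m : ℝ≥0∞) + (aCount m π : ℝ≥0∞) ∧
      ∀ p : Fin m → VT m, (∀ i, p i ∈ VcT m i) →
        (∑ i : Fin m, cT m (p (π i)) (p (π (cyc i)))) = tourValue (cT m) (VcT m) π →
        ∀ i, (p i).2 = true) ∧
    (∀ π π' : Fin m → Fin m, Function.Bijective π → Function.Bijective π' →
      ¬ OptTour (cT m) (VcT m) π → ¬ OptTour (cT m) (VcT m) π' →
      aCount m π < aCount m π' →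
      tourValue (cT m) (VcT m) π < tourValue (cT m) (VcT m) π') := by
  have hm2 : 2 ≤ m := by omega
  have key : ∀ π : Fin m → Fin m, Function.Bijective π → ¬ OptTour (cT m) (VcT m) π →
      tourValue (cT m) (VcT m) π = (m : ℝ≥0∞) + (aCount m π : ℝ≥0∞) ∧
      ∀ p : Fin m → VT m, (∀ i, p i ∈ VcT m i) →
        (∑ i : Fin m, cT m (p (π i)) (p (π (cyc i)))) = tourValue (cT m) (VcT m) π →
        ∀ i, (p i).2 = true := by
    intro π hπ hno
    have ha : aCount m π < m :=
      lt_of_le_of_ne (aCount_le π) (fun h => hno (opt_of_aCount_eq hm2 hπ h))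
    have hub : tourValue (cT m) (VcT m) π ≤
        ∑ i : Fin m, cT m ((π i), true) ((π (cyc i)), true) := by
      unfold tourValue
      exact iInf₂_le (fun j => (j, true)) (fun i => by simp [VcT])
    rw [white_sum hm2 hπ.1] at hub
    have hlb : ∀ p : Fin m → VT m, (∀ i, p i ∈ VcT m i) →
        (m : ℝ≥0∞) + (aCount m π : ℝ≥0∞) ≤
          ∑ i : Fin m, cT m (p (π i)) (p (π (cyc i))) := by
      intro p hp
      by_cases hw : ∀ i, (p i).2 = true
      · have hpe : ∀ i, p i = (i, true) := fun i => by
          have h1 := VcT_eq (hp i); rw [hw i] at h1; exact h1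
        rw [Finset.sum_congr rfl (fun i _ => by rw [hpe (π i), hpe (π (cyc i))]),
          white_sum hm2 hπ.1]
      · exact le_trans (le_of_lt (add_lt_sq hm (aCount_le π))) (mixed_lb hm hπ ha hp hw)
    have hlb' : (m : ℝ≥0∞) + (aCount m π : ℝ≥0∞) ≤ tourValue (cT m) (VcT m) π := by
      unfold tourValue; exact le_iInf₂ hlb
    have heq : tourValue (cT m) (VcT m) π = (m : ℝ≥0∞) + (aCount m π : ℝ≥0∞) :=
      le_antisymm hub hlb'
    refine ⟨heq, fun p hp hsum i => ?_⟩
    by_contra hwi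
    have hge := mixed_lb hm hπ ha hp (fun hall => hwi (hall i))
    rw [hsum, heq] at hge
    exact absurd hge (not_le.mpr (add_lt_sq hm (aCount_le π)))
  refine ⟨key, fun π π' h1 h2 h3 h4 h5 => ?_⟩
  rw [(key π h1 h3).1, (key π' h2 h4).1]
  have hc : ((m + aCount m π : ℕ) : ℝ≥0∞) < ((m + aCount m π' : ℕ) : ℝ≥0∞) :=
    Nat.cast_lt.mpr (by omega)
  push_cast at hc
  exact hc
end
end

section
/- For a permutation pi of {0,1,...,m-1}, viewed as a cyclic sequence, let S(pi) = |{ i in {0,...,m-1} : pi_{(i+1) mod m} = (pi_i + 1) mod m }|. If pi' is obtained from pi by a single jump operation, then a jump changes at most 3 of the cyclically adjacent pairs of the sequence, and hence |S(pi') - S(pi)| <= 3. Consequently, transforming a permutation pi with S(pi) <= epsilon*m into a permutation pi* with S(pi*) = m requires at least (1-epsilon)*m/3 jump operations. -/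
open scoped Classical

/-- The jump operation on a list: the element at position `j` is removed and reinserted at
position `k` (shifting the intermediate elements accordingly). -/
def jumpList {α : Type*} (l : List α) (j k : ℕ) : List α :=
  match l[j]? with
  | none => l
  | some a => (l.eraseIdx j).insertIdx k a

/-- The jump operation on a permutation `π` of `Fin m`, viewed as the cyclic sequence
`π 0, …, π (m-1)`: the element at position `j` is removed and reinserted at position `k`. -/
def jumpFun {m : ℕ} (π : Fin m → Fin m) (j k : Fin m) : Fin m → Fin m :=
  fun i => (jumpList (List.ofFn π) j.val k.val).getD i.val (π i)

/-- For a permutation `π` of `{0, …, m-1}`, viewed as a cyclic sequence,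
`S π = |{i : π ((i+1) mod m) = (π i + 1) mod m}|`. -/
noncomputable def Scount {m : ℕ} (π : Fin m → Fin m) : ℕ :=
  (Finset.univ.filter (fun i : Fin m => π (cyc i) = cyc (π i))).card

/-- The cyclically adjacent pairs of the sequence `π 0, …, π (m-1)`. -/
noncomputable def adjPairs {m : ℕ} (π : Fin m → Fin m) : Finset (Fin m × Fin m) :=
  Finset.univ.image (fun i : Fin m => (π i, π (cyc i)))

def tauN (j k i : ℕ) : ℕ :=
  if k ≤ j then (if i < k then i else if i = k then j else if i ≤ j then i - 1 else i)
  else (if i < j then i else if i < k then i + 1 else if i = k then j else i)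

lemma tauN_lt {m j k i : ℕ} (hj : j < m) (hk : k < m) (hi : i < m) : tauN j k i < m := by
  unfold tauN; split_ifs <;> omega

def tauF {m : ℕ} (j k : Fin m) : Fin m → Fin m :=
  fun i => ⟨tauN j.val k.val i.val, tauN_lt j.isLt k.isLt i.isLt⟩

lemma jumpFun_eq {m : ℕ} (π : Fin m → Fin m) (j k : Fin m) :
    jumpFun π j k = π ∘ tauF j k := by
  funext i
  have hj := j.isLt
  have hk := k.isLt
  have hi := i.isLt
  have hlo : (List.ofFn π).length = m := List.length_ofFn
  have hje : (List.ofFn π)[j.val]? = some (π j) := by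
    rw [List.getElem?_eq_getElem (by omega)]
    simp [List.getElem_ofFn]
  have hle : ((List.ofFn π).eraseIdx j.val).length = m - 1 := by
    rw [List.length_eraseIdx]; simp [hlo]
  have hli : ((((List.ofFn π).eraseIdx j.val)).insertIdx k.val (π j)).length = m := by
    rw [List.length_insertIdx]; split_ifs <;> omega
  simp only [jumpFun, jumpList, hje]
  rw [List.getD_eq_getElem _ _ (by omega : i.val < _)]
  have key : ∀ t, ∀ ht : t < m,
      ((((List.ofFn π).eraseIdx j.val)).insertIdx k.val (π j))[t]'(by omega)
        = π ⟨tauN j.val k.val t, tauN_lt hj hk ht⟩ := by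
    intro t ht
    rcases lt_trichotomy t k.val with h | h | h
    · rw [List.getElem_insertIdx_of_lt h]
      rw [List.getElem_eraseIdx]
      split_ifs with h' <;>
      · rw [List.getElem_ofFn]
        exact congrArg π (Fin.ext (by simp only [Fin.val_mk, tauN]; split_ifs <;> omega))
    · subst h
      rw [List.getElem_insertIdx_self]
      exact congrArg π (Fin.ext (by simp only [Fin.val_mk, tauN]; split_ifs <;> omega))
    · obtain ⟨u, rfl⟩ : ∃ u, t = k.val + u + 1 := ⟨t - k.val - 1, by omega⟩
      rw [List.getElem_insertIdx_add_succ _ _ _ _ (by omega)]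
      rw [List.getElem_eraseIdx]
      split_ifs with h' <;>
      · rw [List.getElem_ofFn]
        exact congrArg π (Fin.ext (by simp only [Fin.val_mk, tauN]; split_ifs <;> omega))
  exact key i.val hi

lemma tauF_inj {m : ℕ} (j k : Fin m) : Function.Injective (tauF j k) := by
  intro a b h
  have h2 := congrArg Fin.val h
  have ha := a.isLt; have hb := b.isLt; have hj := j.isLt; have hk := k.isLt
  simp only [tauF, Fin.val_mk, tauN] at h2
  exact Fin.ext (by split_ifs at h2 <;> omega)

lemma tauF_bij {m : ℕ} (j k : Fin m) : Function.Bijective (tauF j k) :=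
  Finite.injective_iff_bijective.mp (tauF_inj j k)

lemma mod_succ {m w : ℕ} (hw : w < m) : (w + 1) % m = if w + 1 = m then 0 else w + 1 := by
  split_ifs with h
  · simp [h]
  · exact Nat.mod_eq_of_lt (by omega)

lemma pred_mod {m x : ℕ} (hx : x < m) : (x + (m - 1)) % m = if x = 0 then m - 1 else x - 1 := by
  split_ifs with h
  · subst h; simpa using Nat.mod_eq_of_lt (show m - 1 < m by omega)
  · have : x + (m - 1) = (x - 1) + m := by omega
    rw [this, Nat.add_mod_right]
    exact Nat.mod_eq_of_lt (by omega)

lemma tauN_comm {m j k w : ℕ} (hj : j < m) (hk : k < m) (hw : w < m)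
    (h1 : (w + 1) % m ≠ k) (h2 : w ≠ k)
    (h3 : (k ≤ j ∧ w ≠ j) ∨ (j < k ∧ (w + 1) % m ≠ j)) :
    tauN j k ((w + 1) % m) = (tauN j k w + 1) % m := by
  rw [mod_succ hw] at h1 h3 ⊢
  rw [mod_succ (tauN_lt hj hk hw : tauN j k w < m)]
  by_cases hwm : w + 1 = m
  · simp only [if_pos hwm] at h1 h3 ⊢
    simp only [tauN]
    split_ifs at * <;> omega
  · simp only [if_neg hwm] at h1 h3 ⊢
    simp only [tauN]
    split_ifs at * <;> omega

noncomputable def kPred {m : ℕ} (k : Fin m) : Fin m :=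
  ⟨(k.val + (m - 1)) % m, Nat.mod_lt _ k.pos⟩

noncomputable def badJ {m : ℕ} (j k : Fin m) : Fin m :=
  if k.val ≤ j.val then j else kPred j

noncomputable def badSet {m : ℕ} (j k : Fin m) : Finset (Fin m) :=
  {kPred k, k, badJ j k}

lemma badSet_card {m : ℕ} (j k : Fin m) : (badSet j k).card ≤ 3 := by
  unfold badSet
  refine (Finset.card_insert_le _ _).trans ?_
  refine Nat.add_le_add_right ((Finset.card_insert_le _ _).trans ?_) 1
  simp

lemma cyc_eq_imp {m : ℕ} {w x : Fin m} (h : cyc w = x) : w = kPred x := by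
  have hv := congrArg Fin.val h
  simp only [cyc, Fin.val_mk] at hv
  have hw := w.isLt; have hx := x.isLt
  refine Fin.ext ?_
  simp only [kPred, Fin.val_mk]
  rw [pred_mod hx]
  rw [mod_succ hw] at hv
  split_ifs at * <;> omega

lemma tauF_comm {m : ℕ} (j k : Fin m) {w : Fin m} (hw : w ∉ badSet j k) :
    tauF j k (cyc w) = cyc (tauF j k w) := by
  simp only [badSet, Finset.mem_insert, Finset.mem_singleton, not_or] at hw
  obtain ⟨h1, h2, h3⟩ := hw
  have h1' : (w.val + 1) % m ≠ k.val := fun h => h1 (cyc_eq_imp (Fin.ext h))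
  have h2' : w.val ≠ k.val := fun h => h2 (Fin.ext h)
  have h3' : (k.val ≤ j.val ∧ w.val ≠ j.val) ∨ (j.val < k.val ∧ (w.val + 1) % m ≠ j.val) := by
    by_cases hkj : k.val ≤ j.val
    · refine Or.inl ⟨hkj, fun h => h3 ?_⟩
      simp only [badJ, if_pos hkj]; exact Fin.ext h
    · refine Or.inr ⟨by omega, fun h => h3 ?_⟩
      simp only [badJ, if_neg hkj]
      exact cyc_eq_imp (Fin.ext h)
  refine Fin.ext ?_
  simp only [tauF, cyc, Fin.val_mk]
  exact tauN_comm j.isLt k.isLt w.isLt h1' h2' h3'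

lemma mem_adjPairs {m : ℕ} {π : Fin m → Fin m} {p : Fin m × Fin m} :
    p ∈ adjPairs π ↔ ∃ i, (π i, π (cyc i)) = p := by
  simp [adjPairs]

lemma diff1_subset {m : ℕ} (π : Fin m → Fin m) (j k : Fin m) :
    adjPairs π \ adjPairs (jumpFun π j k) ⊆
      (badSet j k).image (fun w => (π (tauF j k w), π (cyc (tauF j k w)))) := by
  intro p hp
  rw [Finset.mem_sdiff, mem_adjPairs, mem_adjPairs] at hp
  obtain ⟨⟨i, hi⟩, hnot⟩ := hp
  obtain ⟨w, rfl⟩ := (tauF_bij j k).surjective i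
  by_cases hw : w ∈ badSet j k
  · exact Finset.mem_image.mpr ⟨w, hw, hi⟩
  · exfalso
    refine hnot ⟨w, ?_⟩
    rw [jumpFun_eq]
    simp only [Function.comp_apply, tauF_comm j k hw]
    exact hi

lemma diff2_subset {m : ℕ} (π : Fin m → Fin m) (j k : Fin m) :
    adjPairs (jumpFun π j k) \ adjPairs π ⊆
      (badSet j k).image (fun w => (π (tauF j k w), π (tauF j k (cyc w)))) := by
  intro p hp
  rw [Finset.mem_sdiff, mem_adjPairs, mem_adjPairs] at hp
  obtain ⟨⟨w, hw'⟩, hnot⟩ := hp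
  rw [jumpFun_eq] at hw'
  simp only [Function.comp_apply] at hw'
  by_cases hw : w ∈ badSet j k
  · exact Finset.mem_image.mpr ⟨w, hw, hw'⟩
  · exfalso
    refine hnot ⟨tauF j k w, ?_⟩
    rw [← tauF_comm j k hw]
    exact hw'

lemma diff1_card {m : ℕ} (π : Fin m → Fin m) (j k : Fin m) :
    (adjPairs π \ adjPairs (jumpFun π j k)).card ≤ 3 :=
  ((Finset.card_le_card (diff1_subset π j k)).trans Finset.card_image_le).trans (badSet_card j k)

lemma diff2_card {m : ℕ} (π : Fin m → Fin m) (j k : Fin m) :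
    (adjPairs (jumpFun π j k) \ adjPairs π).card ≤ 3 :=
  ((Finset.card_le_card (diff2_subset π j k)).trans Finset.card_image_le).trans (badSet_card j k)

noncomputable def goodSet (m : ℕ) : Finset (Fin m × Fin m) :=
  Finset.univ.filter (fun p : Fin m × Fin m => p.2 = cyc p.1)

lemma Scount_eq_inter {m : ℕ} {π : Fin m → Fin m} (hπ : Function.Injective π) :
    Scount π = (adjPairs π ∩ goodSet m).card := by
  have himg : adjPairs π ∩ goodSet m =
      (Finset.univ.filter (fun i : Fin m => π (cyc i) = cyc (π i))).image
        (fun i => (π i, π (cyc i))) := by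
    ext p
    simp only [Finset.mem_inter, mem_adjPairs, goodSet, Finset.mem_filter, Finset.mem_univ,
      true_and, Finset.mem_image]
    constructor
    · rintro ⟨⟨i, rfl⟩, hg⟩
      exact ⟨i, hg, rfl⟩
    · rintro ⟨i, hg, rfl⟩
      exact ⟨⟨i, rfl⟩, hg⟩
  rw [himg, Finset.card_image_of_injOn]
  · rfl
  · intro a _ b _ hab
    exact hπ (congrArg Prod.fst hab)

lemma Scount_le_of_diff {m : ℕ} {π π' : Fin m → Fin m} (hπ : Function.Injective π)
    (hπ' : Function.Injective π') (h : (adjPairs π' \ adjPairs π).card ≤ 3) :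
    Scount π' ≤ Scount π + 3 := by
  rw [Scount_eq_inter hπ, Scount_eq_inter hπ']
  have hsub : adjPairs π' ∩ goodSet m ⊆ (adjPairs π ∩ goodSet m) ∪ (adjPairs π' \ adjPairs π) := by
    intro p hp
    rw [Finset.mem_inter] at hp
    by_cases hpa : p ∈ adjPairs π
    · exact Finset.mem_union_left _ (Finset.mem_inter.mpr ⟨hpa, hp.2⟩)
    · exact Finset.mem_union_right _ (Finset.mem_sdiff.mpr ⟨hp.1, hpa⟩)
  calc (adjPairs π' ∩ goodSet m).card ≤ _ := Finset.card_le_card hsub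
    _ ≤ (adjPairs π ∩ goodSet m).card + (adjPairs π' \ adjPairs π).card :=
        Finset.card_union_le _ _
    _ ≤ (adjPairs π ∩ goodSet m).card + 3 := by omega

lemma jumpFun_bij {m : ℕ} {π : Fin m → Fin m} (hπ : Function.Bijective π) (j k : Fin m) :
    Function.Bijective (jumpFun π j k) := by
  rw [jumpFun_eq]
  exact hπ.comp (tauF_bij j k)

lemma Scount_jump_ge {m : ℕ} {π : Fin m → Fin m} (hπ : Function.Bijective π) (j k : Fin m) :
    Scount π ≤ Scount (jumpFun π j k) + 3 :=
  Scount_le_of_diff (jumpFun_bij hπ j k).injective hπ.injective (diff1_card π j k)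

lemma Scount_jump_le {m : ℕ} {π : Fin m → Fin m} (hπ : Function.Bijective π) (j k : Fin m) :
    Scount (jumpFun π j k) ≤ Scount π + 3 :=
  Scount_le_of_diff hπ.injective (jumpFun_bij hπ j k).injective (diff2_card π j k)

lemma foldl_bound {m : ℕ} (js : List (Fin m × Fin m)) :
    ∀ π : Fin m → Fin m, Function.Bijective π →
      Scount (js.foldl (fun f p => jumpFun f p.1 p.2) π) ≤ Scount π + 3 * js.length := by
  induction js with
  | nil => intro π _; simp
  | cons p js ih =>
    intro π hπ
    have h1 := ih (jumpFun π p.1 p.2) (jumpFun_bij hπ p.1 p.2)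
    have h2 := Scount_jump_le hπ p.1 p.2
    simp only [List.foldl_cons, List.length_cons]
    omega

/-- A single jump operation changes at most `3` of the cyclically adjacent
pairs of the sequence, and hence `|S π' - S π| ≤ 3` whenever `π'` is obtained from `π` by a
single jump; consequently, transforming a permutation `π` with `S π ≤ ε·m` into a
permutation `π*` with `S π* = m` requires at least `(1-ε)·m/3` jump operations. -/
theorem jump_changes_at_most_three (m : ℕ) :
    (∀ π : Fin m → Fin m, Function.Bijective π → ∀ j k : Fin m,
      (adjPairs π \ adjPairs (jumpFun π j k)).card ≤ 3 ∧
      (adjPairs (jumpFun π j k) \ adjPairs π).card ≤ 3 ∧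
      |(Scount (jumpFun π j k) : ℤ) - (Scount π : ℤ)| ≤ 3) ∧
    (∀ (ε : ℝ) (π : Fin m → Fin m), Function.Bijective π →
      (Scount π : ℝ) ≤ ε * m →
      ∀ js : List (Fin m × Fin m),
        Scount (js.foldl (fun f p => jumpFun f p.1 p.2) π) = m →
        (1 - ε) * m / 3 ≤ (js.length : ℝ)) := by
  constructor
  · intro π hπ j k
    refine ⟨diff1_card π j k, diff2_card π j k, ?_⟩
    have h1 := Scount_jump_ge hπ j k
    have h2 := Scount_jump_le hπ j k
    rw [abs_le]
    constructor <;> push_cast <;> omega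
  · intro ε π hπ hS js hfin
    have hb := foldl_bound js π hπ
    rw [hfin] at hb
    have hb' : (m : ℝ) ≤ (Scount π : ℝ) + 3 * js.length := by exact_mod_cast hb
    have : (1 - ε) * m ≤ 3 * js.length := by nlinarith
    linarith
end
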